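/- Let Π be a stochastic matrix on a finite state space with all entries strictly positive, and let π be any probability vector. Then the sequence Πⁿπ converges as n → ∞ (to the unique stationary distribution of Π). -/

import Mathlib

open Matrix Filter

/-- A stochastic matrix with strictly positive entries: `Πⁿπ` converges to the unique
stationary probability vector. -/
theorem positive_stochastic_matrix_convergence (m : ℕ) (hm : 0 < m)
    (P : Matrix (Fin m) (Fin m) ℝ)
    (hpos : ∀ i j, 0 < P i j) (hstoch : ∀ j, ∑ i, P i j = 1)
    (π₀ : Fin m → ℝ) (hπ₀ : ∀ i, 0 ≤ π₀ i) (hsum : ∑ i, π₀ i = 1) :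
    ∃ πinf : Fin m → ℝ, (∀ i, 0 ≤ πinf i) ∧ (∑ i, πinf i = 1) ∧
      P.mulVec πinf = πinf ∧
      Tendsto (fun n : ℕ => (P ^ n).mulVec π₀) atTop (nhds πinf) ∧
      ∀ ρ : Fin m → ℝ, (∀ i, 0 ≤ ρ i) → (∑ i, ρ i = 1) → P.mulVec ρ = ρ → ρ = πinf := by
  haveI : Nonempty (Fin m) := ⟨⟨0, hm⟩⟩
  have hm' : (0:ℝ) < m := by exact_mod_cast hm
  obtain ⟨a, -, ha⟩ := Finset.exists_min_image (Finset.univ : Finset (Fin m × Fin m))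
    (fun p => P p.1 p.2) ⟨(⟨0, hm⟩, ⟨0, hm⟩), Finset.mem_univ _⟩
  set δ := P a.1 a.2 with hδdef
  have hδpos : 0 < δ := hpos _ _
  have hδle : ∀ i j, δ ≤ P i j := fun i j => ha (i, j) (Finset.mem_univ _)
  set c := 1 - m * δ with hcdef
  have hcnn : 0 ≤ c := by
    have h1 : (m : ℝ) * δ ≤ 1 := by
      calc (m:ℝ) * δ = ∑ _i : Fin m, δ := by simp [mul_comm]
      _ ≤ ∑ i, P i a.2 := Finset.sum_le_sum fun i _ => hδle i a.2
      _ = 1 := hstoch a.2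
    linarith
  have hclt : c < 1 := by
    have : 0 < (m:ℝ) * δ := mul_pos hm' hδpos
    simp only [hcdef]; linarith
  -- contraction on mean-zero vectors
  have key : ∀ v : Fin m → ℝ, (∑ j, v j = 0) →
      ∑ i, |P.mulVec v i| ≤ c * ∑ i, |v i| := by
    intro v hv
    have h1 : ∀ i, P.mulVec v i = ∑ j, (P i j - δ) * v j := by
      intro i
      simp only [Matrix.mulVec, dotProduct, sub_mul, Finset.sum_sub_distrib,
        ← Finset.mul_sum, hv, mul_zero, sub_zero]
    calc ∑ i, |P.mulVec v i| = ∑ i, |∑ j, (P i j - δ) * v j| := by simp only [h1]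
      _ ≤ ∑ i, ∑ j, |(P i j - δ) * v j| :=
          Finset.sum_le_sum fun i _ => Finset.abs_sum_le_sum_abs _ _
      _ = ∑ i, ∑ j, (P i j - δ) * |v j| := by
          refine Finset.sum_congr rfl fun i _ => Finset.sum_congr rfl fun j _ => ?_
          rw [abs_mul, abs_of_nonneg (by linarith [hδle i j])]
      _ = ∑ j, (∑ i, (P i j - δ)) * |v j| := by
          rw [Finset.sum_comm]
          exact Finset.sum_congr rfl fun j _ => (Finset.sum_mul _ _ _).symm
      _ = ∑ j, c * |v j| := by
          refine Finset.sum_congr rfl fun j _ => ?_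
          congr 1
          rw [Finset.sum_sub_distrib, hstoch j]
          simp [hcdef, Finset.sum_const, Finset.card_univ, nsmul_eq_mul]
      _ = c * ∑ i, |v i| := by rw [Finset.mul_sum]
  -- basic preservation lemmas
  have sum_pres : ∀ w : Fin m → ℝ, ∑ i, P.mulVec w i = ∑ i, w i := by
    intro w
    simp only [Matrix.mulVec, dotProduct]
    rw [Finset.sum_comm]
    refine Finset.sum_congr rfl fun j _ => ?_
    rw [← Finset.sum_mul, hstoch j, one_mul]
  set x : ℕ → Fin m → ℝ := fun n => (P ^ n).mulVec π₀ with hxdef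
  have hx0 : x 0 = π₀ := by simp [hxdef]
  have hxs : ∀ n, x (n + 1) = P.mulVec (x n) := by
    intro n
    simp only [hxdef, Matrix.mulVec_mulVec, ← pow_succ']
  have xsum : ∀ n, ∑ i, x n i = 1 := by
    intro n
    induction n with
    | zero => simpa [hx0] using hsum
    | succ n ih => rw [hxs n, sum_pres, ih]
  have xnn : ∀ n i, 0 ≤ x n i := by
    intro n
    induction n with
    | zero => simpa [hx0] using hπ₀
    | succ n ih =>
        intro i
        rw [hxs n]
        simp only [Matrix.mulVec, dotProduct]
        exact Finset.sum_nonneg fun j _ => mul_nonneg (hpos i j).le (ih j)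
  set C := ∑ i, |x 1 i - x 0 i| with hCdef
  have hd : ∀ n, ∑ i, |x (n + 1) i - x n i| ≤ c ^ n * C := by
    intro n
    induction n with
    | zero => simp [hCdef]
    | succ n ih =>
        have hsub : ∀ i, x (n + 1 + 1) i - x (n + 1) i =
            P.mulVec (x (n + 1) - x n) i := by
          intro i
          have h := congrFun (Matrix.mulVec_sub P (x (n + 1)) (x n)) i
          rw [← hxs (n + 1), ← hxs n] at h
          rw [h]
          rfl
        have hz : ∑ j, (x (n + 1) j - x n j) = 0 := by
          rw [Finset.sum_sub_distrib, xsum, xsum, sub_self]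
        calc ∑ i, |x (n + 1 + 1) i - x (n + 1) i|
            = ∑ i, |P.mulVec (x (n + 1) - x n) i| :=
              Finset.sum_congr rfl fun i _ => by rw [hsub i]
          _ ≤ c * ∑ i, |(x (n + 1) - x n) i| := key _ (by simpa [Pi.sub_apply] using hz)
          _ = c * ∑ i, |x (n + 1) i - x n i| := rfl
          _ ≤ c * (c ^ n * C) := by
              exact mul_le_mul_of_nonneg_left ih hcnn
          _ = c ^ (n + 1) * C := by ring
  -- Cauchy sequence
  have hcauchy : CauchySeq x := by
    apply cauchySeq_of_le_geometric c C hclt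
    intro n
    have hCc : 0 ≤ c ^ n * C := le_trans (Finset.sum_nonneg fun i _ => abs_nonneg _) (hd n)
    rw [dist_pi_le_iff (by rw [mul_comm]; exact hCc)]
    intro i
    rw [Real.dist_eq]
    calc |x n i - x (n + 1) i| = |x (n + 1) i - x n i| := abs_sub_comm _ _
      _ ≤ ∑ j, |x (n + 1) j - x n j| :=
          Finset.single_le_sum (f := fun j => |x (n + 1) j - x n j|)
            (fun j _ => abs_nonneg _) (Finset.mem_univ i)
      _ ≤ c ^ n * C := hd n
      _ = C * c ^ n := mul_comm _ _
  obtain ⟨πinf, hlim⟩ := cauchySeq_tendsto_of_complete hcauchy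
  have hcoord : ∀ i, Tendsto (fun n => x n i) atTop (nhds (πinf i)) := by
    intro i
    exact ((continuous_apply i).tendsto _).comp hlim
  refine ⟨πinf, ?_, ?_, ?_, hlim, ?_⟩
  · intro i
    exact ge_of_tendsto' (hcoord i) fun n => xnn n i
  · have hts : Tendsto (fun n => ∑ i, x n i) atTop (nhds (∑ i, πinf i)) :=
      tendsto_finset_sum _ fun i _ => hcoord i
    have : Tendsto (fun _ : ℕ => (1:ℝ)) atTop (nhds (∑ i, πinf i)) := by
      simpa [xsum] using hts
    exact (tendsto_nhds_unique tendsto_const_nhds this).symm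
  · have h1 : Tendsto (fun n => x (n + 1)) atTop (nhds πinf) :=
      hlim.comp (tendsto_add_atTop_nat 1)
    have h2 : Tendsto (fun n => P.mulVec (x n)) atTop (nhds (P.mulVec πinf)) := by
      exact (Continuous.matrix_mulVec continuous_const continuous_id).tendsto πinf |>.comp hlim
    have h3 : Tendsto (fun n => P.mulVec (x n)) atTop (nhds πinf) := by
      simpa [← hxs] using h1
    exact tendsto_nhds_unique h2 h3
  · intro ρ hρnn hρsum hρfix
    have hπfix : P.mulVec πinf = πinf := by
      have h1 : Tendsto (fun n => x (n + 1)) atTop (nhds πinf) :=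
        hlim.comp (tendsto_add_atTop_nat 1)
      have h2 : Tendsto (fun n => P.mulVec (x n)) atTop (nhds (P.mulVec πinf)) :=
        (Continuous.matrix_mulVec continuous_const continuous_id).tendsto πinf |>.comp hlim
      have h3 : Tendsto (fun n => P.mulVec (x n)) atTop (nhds πinf) := by
        simpa [← hxs] using h1
      exact tendsto_nhds_unique h2 h3
    have hπsum : ∑ i, πinf i = 1 := by
      have hts : Tendsto (fun n => ∑ i, x n i) atTop (nhds (∑ i, πinf i)) :=
        tendsto_finset_sum _ fun i _ => hcoord i
      have : Tendsto (fun _ : ℕ => (1:ℝ)) atTop (nhds (∑ i, πinf i)) := by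
        simpa [xsum] using hts
      exact (tendsto_nhds_unique tendsto_const_nhds this).symm
    set v : Fin m → ℝ := ρ - πinf with hvdef
    have hvz : ∑ j, v j = 0 := by
      simp [hvdef, Pi.sub_apply, Finset.sum_sub_distrib, hρsum, hπsum]
    have hvfix : P.mulVec v = v := by
      rw [hvdef, Matrix.mulVec_sub, hρfix, hπfix]
    have hle : ∑ i, |v i| ≤ c * ∑ i, |v i| := by
      have := key v hvz
      rwa [hvfix] at this
    have hvnn : 0 ≤ ∑ i, |v i| := Finset.sum_nonneg fun i _ => abs_nonneg _
    have hvzero : ∑ i, |v i| = 0 := by nlinarith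
    have : ∀ i, v i = 0 := by
      intro i
      have := (Finset.sum_eq_zero_iff_of_nonneg fun j _ => abs_nonneg (v j)).mp hvzero i
        (Finset.mem_univ i)
      exact abs_eq_zero.mp this
    funext i
    have h := this i
    simp only [hvdef, Pi.sub_apply] at h
    linarith
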